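/- Let K ≥ 1, M > 0, ε > 0, let T₀ ≥ 0 and w ≥ 1 be integers, and set W = {T₀+1, …, T₀+w}. Let (Q_t)_{t ≥ T₀} be vectors in ℝ_{≥0}^K with |Q_{t,i} − Q_{t−1,i}| ≤ M for all t > T₀ and all i. For each t ∈ W let θ_t ∈ Δ^{[K]} and σ_t, λ_t ∈ [0, M]^K, and assume that for every coordinate j: (1/w)·Σ_{t∈W} θ_{t,j}·σ_{t,j} ≥ ε + (1/w)·Σ_{t∈W} λ_{t,j}. Then Σ_{t∈W} ⟨Q_{t−1}, θ_t ⊙ σ_t − λ_t⟩ ≥ ε·Σ_{t∈W} ‖Q_{t−1}‖₁ − (K·M² + ε·K·M)·(w − 1)². -/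

import Mathlib

/-- the single-window negative-drift estimate under the piecewise
stabilizability assumption: if the reference randomized policy `θ` has an `ε` service
advantage over arrivals on the window `W = {T₀+1, …, T₀+w}`, then
`Σ_{t∈W} ⟨Q_{t−1}, θ_t ⊙ σ_t − λ_t⟩ ≥ ε·Σ_{t∈W} ‖Q_{t−1}‖₁ − (KM² + εKM)(w−1)²`. -/
theorem window_negative_drift (K : ℕ) (hK : 1 ≤ K) (M ε : ℝ) (hM : 0 < M) (hε : 0 < ε)
    (T₀ w : ℕ) (hw : 1 ≤ w)
    (Q θ σ lam : ℕ → Fin K → ℝ)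
    (hQnn : ∀ t i, 0 ≤ Q t i)
    (hinc : ∀ t : ℕ, T₀ < t → ∀ i, |Q t i - Q (t - 1) i| ≤ M)
    (hθ : ∀ t ∈ Finset.Icc (T₀ + 1) (T₀ + w),
      (∀ i, 0 ≤ θ t i) ∧ ∑ i, θ t i = 1)
    (hσ : ∀ t ∈ Finset.Icc (T₀ + 1) (T₀ + w), ∀ i, 0 ≤ σ t i ∧ σ t i ≤ M)
    (hlam : ∀ t ∈ Finset.Icc (T₀ + 1) (T₀ + w), ∀ i, 0 ≤ lam t i ∧ lam t i ≤ M)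
    (hadv : ∀ j : Fin K,
      ε + (1 / (w : ℝ)) * ∑ t ∈ Finset.Icc (T₀ + 1) (T₀ + w), lam t j ≤
        (1 / (w : ℝ)) * ∑ t ∈ Finset.Icc (T₀ + 1) (T₀ + w), θ t j * σ t j) :
    ε * (∑ t ∈ Finset.Icc (T₀ + 1) (T₀ + w), ∑ i, |Q (t - 1) i|) -
        ((K : ℝ) * M ^ 2 + ε * (K : ℝ) * M) * ((w : ℝ) - 1) ^ 2 ≤
      ∑ t ∈ Finset.Icc (T₀ + 1) (T₀ + w),
        ∑ i, Q (t - 1) i * (θ t i * σ t i - lam t i) := by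
  classical
  have hw0 : (0:ℝ) < (w:ℝ) := by exact_mod_cast hw
  have hwne : (w:ℝ) ≠ 0 := ne_of_gt hw0
  -- reindex lemma
  have hre : ∀ f : ℕ → ℝ,
      ∑ t ∈ Finset.Icc (T₀ + 1) (T₀ + w), f t = ∑ n ∈ Finset.range w, f (T₀ + 1 + n) := by
    intro f
    rw [← Finset.Ico_add_one_right_eq_Icc, Finset.sum_Ico_eq_sum_range,
      show T₀ + w + 1 - (T₀ + 1) = w from by omega]
  have hmem : ∀ n, n ∈ Finset.range w → (T₀ + 1 + n) ∈ Finset.Icc (T₀ + 1) (T₀ + w) := by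
    intro n hn
    rw [Finset.mem_range] at hn
    rw [Finset.mem_Icc]
    omega
  have hco : ∀ n : ℕ, T₀ + 1 + n - 1 = T₀ + n := fun n => by omega
  rw [hre, hre]
  simp only [hco]
  -- drift bound
  have hstep : ∀ (n : ℕ) (i : Fin K), |Q (T₀ + n) i - Q T₀ i| ≤ M * n := by
    intro n
    induction n with
    | zero => intro i; simp
    | succ n ih =>
      intro i
      have h1 := hinc (T₀ + n + 1) (by omega) i
      have he : T₀ + n + 1 - 1 = T₀ + n := by omega
      rw [he] at h1
      have h2 : |Q (T₀ + (n + 1)) i - Q T₀ i|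
          ≤ |Q (T₀ + n + 1) i - Q (T₀ + n) i| + |Q (T₀ + n) i - Q T₀ i| := by
        have he2 : T₀ + (n + 1) = T₀ + n + 1 := by omega
        rw [he2]
        exact abs_sub_le _ _ _
      have := ih i
      push_cast
      linarith
  -- θ ≤ 1
  have hθ1 : ∀ t ∈ Finset.Icc (T₀ + 1) (T₀ + w), ∀ i, θ t i ≤ 1 := by
    intro t ht i
    obtain ⟨hnn, hsum⟩ := hθ t ht
    calc θ t i ≤ ∑ j, θ t j := Finset.single_le_sum (fun j _ => hnn j) (Finset.mem_univ i)
    _ = 1 := hsum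
  -- bound on the drift term X
  have hX : ∀ n ∈ Finset.range w, ∀ i,
      |θ (T₀ + 1 + n) i * σ (T₀ + 1 + n) i - lam (T₀ + 1 + n) i| ≤ M := by
    intro n hn i
    have ht := hmem n hn
    obtain ⟨hσ1, hσ2⟩ := hσ _ ht i
    obtain ⟨hl1, hl2⟩ := hlam _ ht i
    have hθnn := (hθ _ ht).1 i
    have hθle := hθ1 _ ht i
    rw [abs_le]
    constructor <;> nlinarith
  -- key advantage fact
  have hkey : ∀ j : Fin K, ε * w ≤
      ∑ n ∈ Finset.range w, (θ (T₀+1+n) j * σ (T₀+1+n) j - lam (T₀+1+n) j) := by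
    intro j
    have h := hadv j
    rw [hre (fun t => lam t j), hre (fun t => θ t j * σ t j)] at h
    rw [Finset.sum_sub_distrib]
    field_simp at h
    have h2 := h
    linarith
  set T : ℝ := ∑ i, Q T₀ i with hT
  have hTnn : 0 ≤ T := Finset.sum_nonneg (fun i _ => hQnn T₀ i)
  set Sn : ℝ := ∑ n ∈ Finset.range w, (n:ℝ) with hSn
  have hSnnn : 0 ≤ Sn := Finset.sum_nonneg (fun n _ => Nat.cast_nonneg n)
  -- Sn value and bound
  have hSval : Sn * 2 = (w:ℝ) * ((w:ℝ) - 1) := by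
    have h0 := Finset.sum_range_id_mul_two w
    have h1 : (((∑ i ∈ Finset.range w, i) * 2 : ℕ) : ℝ) = ((w * (w - 1) : ℕ) : ℝ) := by
      exact_mod_cast h0
    push_cast [Nat.cast_sub hw] at h1
    rw [hSn]
    linarith
  have hSnb : Sn ≤ ((w:ℝ) - 1)^2 := by
    rcases Nat.lt_or_ge w 2 with h2 | h2
    · interval_cases w
      simp [hSn]
    · have : (2:ℝ) ≤ (w:ℝ) := by exact_mod_cast h2
      nlinarith
  -- bound A from below
  have hA : ε * w * T ≤ ∑ n ∈ Finset.range w, ∑ i,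
      Q T₀ i * (θ (T₀+1+n) i * σ (T₀+1+n) i - lam (T₀+1+n) i) := by
    rw [Finset.sum_comm]
    have he : ε * w * T = ∑ i, Q T₀ i * (ε * w) := by
      rw [← Finset.sum_mul, hT]; ring
    rw [he]
    apply Finset.sum_le_sum
    intro i _
    rw [← Finset.mul_sum]
    exact mul_le_mul_of_nonneg_left (hkey i) (hQnn T₀ i)
  -- main sum lower bound: S ≥ A - K M^2 Sn
  have hconst1 : ∑ n ∈ Finset.range w, (K:ℝ) * (M^2 * (n:ℝ)) = (K:ℝ) * M^2 * Sn := by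
    rw [hSn, Finset.mul_sum]
    exact Finset.sum_congr rfl (fun n _ => by ring)
  have hmain : (∑ n ∈ Finset.range w, ∑ i,
        Q T₀ i * (θ (T₀+1+n) i * σ (T₀+1+n) i - lam (T₀+1+n) i)) - (K:ℝ) * M^2 * Sn
      ≤ ∑ n ∈ Finset.range w, ∑ i,
        Q (T₀ + n) i * (θ (T₀+1+n) i * σ (T₀+1+n) i - lam (T₀+1+n) i) := by
    have hpt : ∀ n ∈ Finset.range w, ∀ i : Fin K,
        Q T₀ i * (θ (T₀+1+n) i * σ (T₀+1+n) i - lam (T₀+1+n) i) - M^2 * n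
        ≤ Q (T₀ + n) i * (θ (T₀+1+n) i * σ (T₀+1+n) i - lam (T₀+1+n) i) := by
      intro n hn i
      have h1 := hstep n i
      have h2 := hX n hn i
      have h3 : (Q T₀ i - Q (T₀ + n) i) *
          (θ (T₀+1+n) i * σ (T₀+1+n) i - lam (T₀+1+n) i) ≤ M * n * M := by
        calc (Q T₀ i - Q (T₀ + n) i) * (θ (T₀+1+n) i * σ (T₀+1+n) i - lam (T₀+1+n) i)
            ≤ |(Q T₀ i - Q (T₀ + n) i) * (θ (T₀+1+n) i * σ (T₀+1+n) i - lam (T₀+1+n) i)| :=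
              le_abs_self _
          _ = |Q T₀ i - Q (T₀ + n) i| * |θ (T₀+1+n) i * σ (T₀+1+n) i - lam (T₀+1+n) i| :=
              abs_mul _ _
          _ ≤ M * n * M := by
              rw [abs_sub_comm]
              apply mul_le_mul h1 h2 (abs_nonneg _)
              positivity
      nlinarith [h3]
    have e1 : ∀ n : ℕ, ∑ i : Fin K,
        (Q T₀ i * (θ (T₀+1+n) i * σ (T₀+1+n) i - lam (T₀+1+n) i) - M^2 * (n:ℝ))
        = (∑ i, Q T₀ i * (θ (T₀+1+n) i * σ (T₀+1+n) i - lam (T₀+1+n) i))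
          - (K:ℝ) * (M^2 * (n:ℝ)) := by
      intro n
      rw [Finset.sum_sub_distrib]
      simp [Finset.sum_const]
    calc (∑ n ∈ Finset.range w, ∑ i,
          Q T₀ i * (θ (T₀+1+n) i * σ (T₀+1+n) i - lam (T₀+1+n) i)) - (K:ℝ) * M^2 * Sn
        = ∑ n ∈ Finset.range w, ∑ i : Fin K,
          (Q T₀ i * (θ (T₀+1+n) i * σ (T₀+1+n) i - lam (T₀+1+n) i) - M^2 * (n:ℝ)) := by
          rw [Finset.sum_congr rfl (fun n _ => e1 n), Finset.sum_sub_distrib, hconst1]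
      _ ≤ _ := Finset.sum_le_sum (fun n hn => Finset.sum_le_sum (fun i _ => hpt n hn i))
  -- bound on the abs sum
  have hconst2 : ∑ n ∈ Finset.range w, (K:ℝ) * (M * (n:ℝ)) = (K:ℝ) * M * Sn := by
    rw [hSn, Finset.mul_sum]
    exact Finset.sum_congr rfl (fun n _ => by ring)
  have hB : ∑ n ∈ Finset.range w, ∑ i, |Q (T₀ + n) i| ≤ (w:ℝ) * T + (K:ℝ) * M * Sn := by
    have hpt : ∀ n ∈ Finset.range w, ∀ i : Fin K, |Q (T₀ + n) i| ≤ Q T₀ i + M * n := by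
      intro n _ i
      rw [abs_of_nonneg (hQnn _ i)]
      have h := abs_le.mp (hstep n i)
      linarith [h.2]
    have e2 : ∀ n : ℕ, ∑ i : Fin K, (Q T₀ i + M * (n:ℝ)) = T + (K:ℝ) * (M * (n:ℝ)) := by
      intro n
      rw [Finset.sum_add_distrib]
      simp [Finset.sum_const, hT]
    calc ∑ n ∈ Finset.range w, ∑ i, |Q (T₀ + n) i|
        ≤ ∑ n ∈ Finset.range w, ∑ i : Fin K, (Q T₀ i + M * (n:ℝ)) :=
          Finset.sum_le_sum (fun n hn => Finset.sum_le_sum (fun i _ => hpt n hn i))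
      _ = (w:ℝ) * T + (K:ℝ) * M * Sn := by
          rw [Finset.sum_congr rfl (fun n _ => e2 n), Finset.sum_add_distrib, hconst2,
            Finset.sum_const, Finset.card_range, nsmul_eq_mul]
  have hKM2 : (0:ℝ) ≤ (K:ℝ) * M^2 := by positivity
  have hεKM : (0:ℝ) ≤ ε * ((K:ℝ) * M) := by positivity
  nlinarith [hA, hmain, hB, mul_le_mul_of_nonneg_left hB hε.le,
    mul_le_mul_of_nonneg_left hSnb hKM2,
    mul_le_mul_of_nonneg_left hSnb hεKM]
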